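/- arXiv:1805.04981 — 8 statements merged into one kernel-verified Lean document; each statement's English description precedes it below -/
import Mathlib

section
/- Let α, B1, B2, P̄1, P̄2, L̃1, L̃2 be positive reals with L̃1 < L̃2, and set α1 = α2 = α (equal channel gains). Suppose (P11*, P21*, P23*, R21*, R23*) is a global minimizer of E_M over S_M (the two-slot full multiple access offloading problem) and that P11* + P21* ≤ min(P̄1, P̄2). Then there exists a point (P1, P2, R1, R2) in the TDMA feasible set S_T whose TDMA objective value E_T is at most the optimal value E_M(P11*, P21*, P23*, R21*, R23*). (Proposition 2: with equal channel gains and power budgets above the stated threshold, TDMA achieves the optimal energy consumption of the full multiple access scheme.) -/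
/-- Base-2 logarithm. -/
noncomputable def log2 (x : ℝ) : ℝ := Real.logb 2 x

/-- Feasible set of the two-slot full multiple access offloading problem. -/
def SMFeas (α1 α2 B1 B2 Pb1 Pb2 Lt1 Lt2 P11 P21 P23 R21 R23 : ℝ) : Prop :=
  0 ≤ P11 ∧ P11 ≤ Pb1 ∧ 0 ≤ P21 ∧ P21 ≤ Pb2 ∧ 0 ≤ P23 ∧ P23 ≤ Pb2 ∧
  B1 / Lt1 ≤ log2 (1 + α1 * P11) ∧
  0 ≤ R21 ∧ R21 ≤ log2 (1 + α2 * P21) ∧ Lt1 * R21 ≤ B2 ∧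
  B1 / Lt1 + R21 ≤ log2 (1 + α1 * P11 + α2 * P21) ∧
  0 < R23 ∧ R23 ≤ log2 (1 + α2 * P23) ∧
  Lt1 + (B2 - Lt1 * R21) / R23 ≤ Lt2

/-- Objective of the two-slot full multiple access offloading problem. -/
noncomputable def EM (B2 Lt1 P11 P21 P23 R21 R23 : ℝ) : ℝ :=
  Lt1 * (P11 + P21) + ((B2 - Lt1 * R21) / R23) * P23

/-- Feasible set of the TDMA offloading problem. -/
def TDMAFeas (α1 α2 B1 B2 Pb1 Pb2 Lt1 Lt2 P1 P2 R1 R2 : ℝ) : Prop :=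
  0 ≤ P1 ∧ P1 ≤ Pb1 ∧ 0 ≤ P2 ∧ P2 ≤ Pb2 ∧
  0 < R1 ∧ R1 ≤ log2 (1 + α1 * P1) ∧ 0 < R2 ∧ R2 ≤ log2 (1 + α2 * P2) ∧
  B1 / R1 ≤ Lt1 ∧ B1 / R1 + B2 / R2 ≤ Lt2

/-- TDMA objective (total transmission energy). -/
noncomputable def ET (B1 B2 P1 P2 R1 R2 : ℝ) : ℝ := (B1 / R1) * P1 + (B2 / R2) * P2

/-- Proposition 2: with equal channel gains and power budgets above the stated threshold,
TDMA achieves the optimal energy consumption of the full multiple access scheme. -/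
theorem tdma_achieves_fullMA_equal_gains
    (α B1 B2 Pb1 Pb2 Lt1 Lt2 P11s P21s P23s R21s R23s : ℝ)
    (hα : 0 < α) (hB1 : 0 < B1) (hB2 : 0 < B2)
    (hPb1 : 0 < Pb1) (hPb2 : 0 < Pb2) (hLt1 : 0 < Lt1) (hLt2 : 0 < Lt2)
    (hL : Lt1 < Lt2)
    (hfeas : SMFeas α α B1 B2 Pb1 Pb2 Lt1 Lt2 P11s P21s P23s R21s R23s)
    (hopt : ∀ P11 P21 P23 R21 R23, SMFeas α α B1 B2 Pb1 Pb2 Lt1 Lt2 P11 P21 P23 R21 R23 →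
      EM B2 Lt1 P11s P21s P23s R21s R23s ≤ EM B2 Lt1 P11 P21 P23 R21 R23)
    (hthr : P11s + P21s ≤ min Pb1 Pb2) :
    ∃ P1 P2 R1 R2, TDMAFeas α α B1 B2 Pb1 Pb2 Lt1 Lt2 P1 P2 R1 R2 ∧
      ET B1 B2 P1 P2 R1 R2 ≤ EM B2 Lt1 P11s P21s P23s R21s R23s := by
  obtain ⟨h110, h11b, h210, h21b, h230, h23b, hB1c, hR210, hR21c, hR21B2, hsum, hR230, hR23c, htime⟩ := hfeas
  obtain ⟨P, hP⟩ : ∃ x : ℝ, x = P11s + P21s := ⟨_, rfl⟩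
  obtain ⟨r, hrdef⟩ : ∃ x : ℝ, x = B1 / Lt1 + R21s := ⟨_, rfl⟩
  obtain ⟨t3, ht3def⟩ : ∃ x : ℝ, x = (B2 - Lt1 * R21s) / R23s := ⟨_, rfl⟩
  have hr0 : 0 < r := by rw [hrdef]; positivity
  obtain ⟨τ, hτdef⟩ : ∃ x : ℝ, x = Lt1 * R21s / r := ⟨_, rfl⟩
  have hτ0 : 0 ≤ τ := by rw [hτdef]; positivity
  have ht30 : 0 ≤ t3 := by rw [ht3def]; exact div_nonneg (by linarith) hR230.le
  have hτr : τ * r = Lt1 * R21s := by rw [hτdef]; exact div_mul_cancel₀ _ hr0.ne'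
  have ht3r : t3 * R23s = B2 - Lt1 * R21s := by rw [ht3def]; exact div_mul_cancel₀ _ hR230.ne'
  obtain ⟨T2, hT2def⟩ : ∃ x : ℝ, x = τ + t3 := ⟨_, rfl⟩
  have hT2 : 0 < T2 := by
    rcases lt_or_eq_of_le hτ0 with h | h
    · rw [hT2def]; linarith
    · rcases lt_or_eq_of_le ht30 with h' | h'
      · rw [hT2def]; linarith
      · exfalso; nlinarith [hτr, ht3r]
  obtain ⟨P2, hP2def⟩ : ∃ x : ℝ, x = (τ * P + t3 * P23s) / T2 := ⟨_, rfl⟩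
  obtain ⟨R2, hR2def⟩ : ∃ x : ℝ, x = B2 / T2 := ⟨_, rfl⟩
  have hP0 : 0 ≤ P := by rw [hP]; linarith
  have hR20 : 0 < R2 := by rw [hR2def]; positivity
  have hbits : τ * r + t3 * R23s = B2 := by rw [hτr, ht3r]; ring
  -- R2 is the convex combination of r and R23s with weights τ/T2, t3/T2
  have hR2comb : R2 = (τ / T2) * r + (t3 / T2) * R23s := by
    rw [hR2def, ← hbits, hT2def]
    field_simp
  have hw1 : 0 ≤ τ / T2 := by positivity
  have hw2 : 0 ≤ t3 / T2 := by positivity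
  have hwsum : τ / T2 + t3 / T2 = 1 := by
    rw [← add_div, hT2def, div_self (by rw [← hT2def]; exact hT2.ne')]
  -- exponential bounds from feasibility
  have hpos1 : (0:ℝ) < 1 + α * P := by
    have : 0 ≤ α * P := by positivity
    linarith
  have hpos23 : (0:ℝ) < 1 + α * P23s := by positivity
  have h2r : (2:ℝ) ^ r ≤ 1 + α * P := by
    rw [← Real.le_logb_iff_rpow_le one_lt_two hpos1]
    have e : 1 + α * P11s + α * P21s = 1 + α * P := by rw [hP]; ring
    rw [hrdef, ← e]
    exact hsum
  have h2R23 : (2:ℝ) ^ R23s ≤ 1 + α * P23s :=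
    (Real.le_logb_iff_rpow_le one_lt_two hpos23).mp hR23c
  -- convexity of 2^x
  have hconv : (2:ℝ) ^ R2 ≤ (τ / T2) * ((2:ℝ) ^ r) + (t3 / T2) * ((2:ℝ) ^ R23s) := by
    have hc := convexOn_exp.2 (Set.mem_univ (Real.log 2 * r)) (Set.mem_univ (Real.log 2 * R23s))
      hw1 hw2 hwsum
    have e1 : (2:ℝ) ^ r = Real.exp (Real.log 2 * r) := Real.rpow_def_of_pos two_pos r
    have e2 : (2:ℝ) ^ R23s = Real.exp (Real.log 2 * R23s) := Real.rpow_def_of_pos two_pos R23s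
    have e3 : (2:ℝ) ^ R2 = Real.exp (Real.log 2 * R2) := Real.rpow_def_of_pos two_pos R2
    rw [e1, e2, e3]
    have earg : (τ / T2) • (Real.log 2 * r) + (t3 / T2) • (Real.log 2 * R23s)
        = Real.log 2 * R2 := by
      simp only [smul_eq_mul]
      rw [hR2comb]; ring
    rw [earg] at hc
    simpa using hc
  have hnum0 : 0 ≤ τ * P + t3 * P23s := by positivity
  have hP20 : 0 ≤ P2 := by rw [hP2def]; positivity
  have hP2pos : (0:ℝ) < 1 + α * P2 := by
    have : 0 ≤ α * P2 := by positivity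
    linarith
  have hR2le : R2 ≤ log2 (1 + α * P2) := by
    rw [log2, Real.le_logb_iff_rpow_le one_lt_two hP2pos]
    have key : (τ / T2) * (1 + α * P) + (t3 / T2) * (1 + α * P23s) = 1 + α * P2 := by
      rw [hP2def]
      field_simp
      rw [hT2def]
      ring
    calc (2:ℝ) ^ R2 ≤ (τ / T2) * ((2:ℝ) ^ r) + (t3 / T2) * ((2:ℝ) ^ R23s) := hconv
      _ ≤ (τ / T2) * (1 + α * P) + (t3 / T2) * (1 + α * P23s) := by gcongr
      _ = 1 + α * P2 := key
  have hPb : P ≤ Pb1 := le_trans (hP ▸ hthr) (min_le_left _ _)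
  have hPb2' : P ≤ Pb2 := le_trans (hP ▸ hthr) (min_le_right _ _)
  have hP2b : P2 ≤ Pb2 := by
    rw [hP2def, div_le_iff₀ hT2]
    calc τ * P + t3 * P23s ≤ τ * Pb2 + t3 * Pb2 := by gcongr
      _ = Pb2 * T2 := by rw [hT2def]; ring
  have hB1r : B1 / r ≤ Lt1 := by
    rw [div_le_iff₀ hr0, hrdef]
    have e1 : Lt1 * (B1 / Lt1) = B1 := mul_div_cancel₀ _ hLt1.ne'
    have e2 : Lt1 * (B1 / Lt1 + R21s) = B1 + Lt1 * R21s := by rw [mul_add, e1]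
    have e3 : 0 ≤ Lt1 * R21s := mul_nonneg hLt1.le hR210
    linarith
  have hB2R2 : B2 / R2 = T2 := by
    rw [hR2def]
    field_simp
  have hB1rτ : B1 / r + τ = Lt1 := by
    have h1 : B1 / r * r = B1 := div_mul_cancel₀ _ hr0.ne'
    have h2 : Lt1 * r = B1 + Lt1 * R21s := by
      rw [hrdef]; field_simp
    have h3 : (B1 / r + τ) * r = Lt1 * r := by
      rw [add_mul, h1, hτr, h2]
    exact mul_right_cancel₀ hr0.ne' h3
  refine ⟨P, P2, r, R2, ⟨hP0, hPb, hP20, hP2b, hr0, ?_, hR20, hR2le, hB1r, ?_⟩, ?_⟩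
  · have e : 1 + α * P11s + α * P21s = 1 + α * P := by rw [hP]; ring
    rw [hrdef, ← e]; exact hsum
  · rw [hB2R2, hT2def]
    rw [← ht3def] at htime
    linarith
  · rw [ET, EM, hB2R2]
    have hT2P2 : T2 * P2 = τ * P + t3 * P23s := by
      rw [hP2def]; field_simp
    have e : B1 / r * P + T2 * P2 = Lt1 * P + t3 * P23s := by
      rw [hT2P2]
      have : B1 / r = Lt1 - τ := by linarith
      rw [this]; ring
    rw [e, hP, ht3def]
end

section
/- Let α1, α2, B1, B2, P̄1, P̄2, L̃1, L̃2 be positive reals with L̃1 ≤ L̃2. For every feasible point of the three-slot full multiple access offloading problem with R12 > 0 and R23 > 0, there exists a feasible point of the two-slot full multiple access offloading problem (in which the first slot has duration L̃1, user 1 transmits all B1 bits in the first slot, and user 2 transmits alone in the second slot) whose objective value equals the objective value of the given three-slot point. Consequently the infimum of the two-slot problem is at most the infimum of the three-slot problem (so two time slots suffice for optimality). -/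
/-- Feasible set of the three-slot full multiple access offloading problem. -/
def ThreeFeas (α1 α2 B1 B2 Pb1 Pb2 Lt1 Lt2 τ1 P11 P12 P21 P23 R11 R12 R21 R23 : ℝ) : Prop :=
  0 ≤ τ1 ∧ 0 ≤ R11 ∧ 0 ≤ R21 ∧
  0 ≤ τ1 * R11 ∧ τ1 * R11 ≤ B1 ∧ 0 ≤ τ1 * R21 ∧ τ1 * R21 ≤ B2 ∧
  τ1 + (B1 - τ1 * R11) / R12 ≤ Lt1 ∧
  τ1 + (B1 - τ1 * R11) / R12 + (B2 - τ1 * R21) / R23 ≤ Lt2 ∧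
  0 ≤ P11 ∧ P11 ≤ Pb1 ∧ 0 ≤ P12 ∧ P12 ≤ Pb1 ∧
  0 ≤ P21 ∧ P21 ≤ Pb2 ∧ 0 ≤ P23 ∧ P23 ≤ Pb2 ∧
  R12 ≤ log2 (1 + α1 * P12) ∧ R23 ≤ log2 (1 + α2 * P23) ∧
  R11 ≤ log2 (1 + α1 * P11) ∧ R21 ≤ log2 (1 + α2 * P21) ∧
  R11 + R21 ≤ log2 (1 + α1 * P11 + α2 * P21)

/-- Objective of the three-slot full multiple access offloading problem. -/
noncomputable def ThreeObj (B1 B2 τ1 P11 P12 P21 P23 R11 R12 R21 R23 : ℝ) : ℝ :=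
  τ1 * (P11 + P21) + ((B1 - τ1 * R11) / R12) * P12 + ((B2 - τ1 * R21) / R23) * P23

lemma log2_jensen3 {w1 w2 w3 x1 x2 x3 : ℝ} (hw1 : 0 ≤ w1) (hw2 : 0 ≤ w2) (hw3 : 0 ≤ w3)
    (hw : w1 + w2 + w3 ≤ 1) (hx1 : 0 ≤ x1) (hx2 : 0 ≤ x2) (hx3 : 0 ≤ x3) :
    w1 * log2 (1 + x1) + w2 * log2 (1 + x2) + w3 * log2 (1 + x3) ≤
      log2 (1 + (w1 * x1 + w2 * x2 + w3 * x3)) := by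
  have h1 : (0:ℝ) < 1 + x1 := by linarith
  have h2 : (0:ℝ) < 1 + x2 := by linarith
  have h3 : (0:ℝ) < 1 + x3 := by linarith
  have hw4 : (0:ℝ) ≤ 1 - (w1 + w2 + w3) := by linarith
  have key := Real.geom_mean_le_arith_mean4_weighted hw1 hw2 hw3 hw4 h1.le h2.le h3.le
    zero_le_one (by ring)
  have hprodpos : (0:ℝ) < (1+x1) ^ w1 * (1+x2) ^ w2 * (1+x3) ^ w3 * 1 ^ (1 - (w1+w2+w3)) := by
    positivity
  have hlog := Real.log_le_log hprodpos key
  have hexp : Real.log ((1+x1) ^ w1 * (1+x2) ^ w2 * (1+x3) ^ w3 * 1 ^ (1 - (w1+w2+w3)))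
      = w1 * Real.log (1+x1) + w2 * Real.log (1+x2) + w3 * Real.log (1+x3) := by
    rw [Real.log_mul (by positivity) (by positivity), Real.log_mul (by positivity) (by positivity),
      Real.log_mul (by positivity) (by positivity), Real.log_rpow h1, Real.log_rpow h2,
      Real.log_rpow h3, Real.one_rpow, Real.log_one]
    ring
  rw [hexp] at hlog
  have harith : w1 * (1+x1) + w2 * (1+x2) + w3 * (1+x3) + (1 - (w1+w2+w3)) * 1
      = 1 + (w1 * x1 + w2 * x2 + w3 * x3) := by ring
  rw [harith] at hlog
  have hlog2 : (0:ℝ) < Real.log 2 := Real.log_pos one_lt_two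
  unfold log2 Real.logb
  have hrw : w1 * (Real.log (1 + x1) / Real.log 2) + w2 * (Real.log (1 + x2) / Real.log 2) +
      w3 * (Real.log (1 + x3) / Real.log 2)
      = (w1 * Real.log (1 + x1) + w2 * Real.log (1 + x2) + w3 * Real.log (1 + x3)) / Real.log 2 := by
    ring
  rw [hrw]
  exact div_le_div_of_nonneg_right hlog hlog2.le

lemma forward_lemma (α1 α2 B1 B2 Pb1 Pb2 Lt1 Lt2 : ℝ)
    (hα1 : 0 < α1) (hα2 : 0 < α2) (hB1 : 0 < B1) (hB2 : 0 < B2)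
    (hPb1 : 0 < Pb1) (hPb2 : 0 < Pb2) (hLt1 : 0 < Lt1) (hLt2 : 0 < Lt2)
    (hL : Lt1 ≤ Lt2)
    (τ1 P11 P12 P21 P23 R11 R12 R21 R23 : ℝ)
    (hF : ThreeFeas α1 α2 B1 B2 Pb1 Pb2 Lt1 Lt2 τ1 P11 P12 P21 P23 R11 R12 R21 R23)
    (hR12 : 0 < R12) (hR23 : 0 < R23) :
    ∃ Q11 Q21 Q23 S21 S23,
      SMFeas α1 α2 B1 B2 Pb1 Pb2 Lt1 Lt2 Q11 Q21 Q23 S21 S23 ∧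
      EM B2 Lt1 Q11 Q21 Q23 S21 S23 =
        ThreeObj B1 B2 τ1 P11 P12 P21 P23 R11 R12 R21 R23 := by
  obtain ⟨hτ, hR11n, hR21n, hτR11n, hτR11B, hτR21n, hτR21B, hD1, hD2, hP11n, hP11b, hP12n,
    hP12b, hP21n, hP21b, hP23n, hP23b, hgR12, hgR23, hgR11, hgR21, hgSum⟩ := hF
  obtain ⟨t2, ht2def⟩ : ∃ x : ℝ, x = (B1 - τ1 * R11) / R12 := ⟨_, rfl⟩
  obtain ⟨t3, ht3def⟩ : ∃ x : ℝ, x = (B2 - τ1 * R21) / R23 := ⟨_, rfl⟩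
  rw [← ht2def] at hD1 hD2
  rw [← ht3def] at hD2
  have ht2 : 0 ≤ t2 := by rw [ht2def]; exact div_nonneg (by linarith) hR12.le
  have ht3 : 0 ≤ t3 := by rw [ht3def]; exact div_nonneg (by linarith) hR23.le
  have ht2R : t2 * R12 = B1 - τ1 * R11 := by rw [ht2def]; exact div_mul_cancel₀ _ hR12.ne'
  have ht3R : t3 * R23 = B2 - τ1 * R21 := by rw [ht3def]; exact div_mul_cancel₀ _ hR23.ne'
  obtain ⟨m, hmdef⟩ : ∃ x : ℝ, x = min t3 (Lt1 - τ1 - t2) := ⟨_, rfl⟩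
  have hslack : 0 ≤ Lt1 - τ1 - t2 := by linarith
  have hmt3' : m ≤ t3 := by rw [hmdef]; exact min_le_left _ _
  have hm0 : 0 ≤ m := by rw [hmdef]; exact le_min ht3 hslack
  have hmt3 : m ≤ t3 := hmt3'
  have hmslack : m ≤ Lt1 - τ1 - t2 := by rw [hmdef]; exact min_le_right _ _
  have hw1 : 0 ≤ τ1 / Lt1 := div_nonneg hτ hLt1.le
  have hw2 : 0 ≤ t2 / Lt1 := div_nonneg ht2 hLt1.le
  have hw3 : 0 ≤ m / Lt1 := div_nonneg hm0 hLt1.le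
  refine ⟨(τ1 * P11 + t2 * P12) / Lt1, (τ1 * P21 + m * P23) / Lt1, P23,
    (τ1 * R21 + m * R23) / Lt1, R23, ?_, ?_⟩
  · refine ⟨?_, ?_, ?_, ?_, hP23n, hP23b, ?_, ?_, ?_, ?_, ?_, hR23, hgR23, ?_⟩
    · exact div_nonneg (add_nonneg (mul_nonneg hτ hP11n) (mul_nonneg ht2 hP12n)) hLt1.le
    · rw [div_le_iff₀ hLt1]
      linarith [mul_le_mul_of_nonneg_left hP11b hτ, mul_le_mul_of_nonneg_left hP12b ht2,
        mul_nonneg hslack hPb1.le]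
    · exact div_nonneg (add_nonneg (mul_nonneg hτ hP21n) (mul_nonneg hm0 hP23n)) hLt1.le
    · rw [div_le_iff₀ hLt1]
      linarith [mul_le_mul_of_nonneg_left hP21b hτ, mul_le_mul_of_nonneg_left hP23b hm0,
        mul_nonneg (by linarith : (0:ℝ) ≤ Lt1 - τ1 - m) hPb2.le]
    · -- B1/Lt1 ≤ log2 (1 + α1 * Q11)
      have hws : τ1 / Lt1 + t2 / Lt1 + 0 ≤ 1 := by
        rw [← add_div, add_zero, div_le_one hLt1]; linarith
      have j := log2_jensen3 hw1 hw2 le_rfl hws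
        (by positivity : (0:ℝ) ≤ α1 * P11) (by positivity : (0:ℝ) ≤ α1 * P12)
        (le_refl (0:ℝ))
      have harg : 1 + (τ1 / Lt1 * (α1 * P11) + t2 / Lt1 * (α1 * P12) + 0 * 0)
          = 1 + α1 * ((τ1 * P11 + t2 * P12) / Lt1) := by field_simp; ring
      rw [harg] at j
      have hB1eq : B1 / Lt1 = τ1 / Lt1 * R11 + t2 / Lt1 * R12 := by
        have hsum : τ1 * R11 + t2 * R12 = B1 := by linarith
        rw [← hsum]; ring
      have m1 := mul_le_mul_of_nonneg_left hgR11 hw1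
      have m2 := mul_le_mul_of_nonneg_left hgR12 hw2
      have h0 : log2 (1 + 0) = 0 := by simp [log2]
      rw [h0] at j
      linarith
    · exact div_nonneg (add_nonneg (mul_nonneg hτ hR21n) (mul_nonneg hm0 hR23.le)) hLt1.le
    · -- S21 ≤ log2 (1 + α2 * Q21)
      have hws : τ1 / Lt1 + m / Lt1 + 0 ≤ 1 := by
        rw [← add_div, add_zero, div_le_one hLt1]; linarith
      have j := log2_jensen3 hw1 hw3 le_rfl hws
        (by positivity : (0:ℝ) ≤ α2 * P21) (by positivity : (0:ℝ) ≤ α2 * P23)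
        (le_refl (0:ℝ))
      have harg : 1 + (τ1 / Lt1 * (α2 * P21) + m / Lt1 * (α2 * P23) + 0 * 0)
          = 1 + α2 * ((τ1 * P21 + m * P23) / Lt1) := by field_simp; ring
      rw [harg] at j
      have hSeq : (τ1 * R21 + m * R23) / Lt1 = τ1 / Lt1 * R21 + m / Lt1 * R23 := by ring
      have m1 := mul_le_mul_of_nonneg_left hgR21 hw1
      have m2 := mul_le_mul_of_nonneg_left hgR23 hw3
      have h0 : log2 (1 + 0) = 0 := by simp [log2]
      rw [h0] at j
      rw [hSeq]
      linarith
    · -- Lt1 * S21 ≤ B2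
      rw [mul_div_cancel₀ _ hLt1.ne']
      have := mul_le_mul_of_nonneg_right hmt3 hR23.le
      linarith
    · -- sum rate
      have hws : τ1 / Lt1 + t2 / Lt1 + m / Lt1 ≤ 1 := by
        rw [← add_div, ← add_div, div_le_one hLt1]; linarith
      have j := log2_jensen3 hw1 hw2 hw3 hws
        (by positivity : (0:ℝ) ≤ α1 * P11 + α2 * P21) (by positivity : (0:ℝ) ≤ α1 * P12)
        (by positivity : (0:ℝ) ≤ α2 * P23)
      have harg : 1 + (τ1 / Lt1 * (α1 * P11 + α2 * P21) + t2 / Lt1 * (α1 * P12)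
            + m / Lt1 * (α2 * P23))
          = 1 + α1 * ((τ1 * P11 + t2 * P12) / Lt1) + α2 * ((τ1 * P21 + m * P23) / Lt1) := by
        field_simp; ring
      rw [harg] at j
      have hB1eq : B1 / Lt1 = τ1 / Lt1 * R11 + t2 / Lt1 * R12 := by
        have hsum : τ1 * R11 + t2 * R12 = B1 := by linarith
        rw [← hsum]; ring
      have hSeq : (τ1 * R21 + m * R23) / Lt1 = τ1 / Lt1 * R21 + m / Lt1 * R23 := by ring
      have hpar : 1 + (α1 * P11 + α2 * P21) = 1 + α1 * P11 + α2 * P21 := by ring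
      rw [hpar] at j
      have m1 := mul_le_mul_of_nonneg_left hgSum hw1
      have m2 := mul_le_mul_of_nonneg_left hgR12 hw2
      have m3 := mul_le_mul_of_nonneg_left hgR23 hw3
      rw [hB1eq, hSeq]
      linarith
    · -- deadline
      have hLS : Lt1 * ((τ1 * R21 + m * R23) / Lt1) = τ1 * R21 + m * R23 :=
        mul_div_cancel₀ _ hLt1.ne'
      rw [hLS]
      have hrem : B2 - (τ1 * R21 + m * R23) = (t3 - m) * R23 := by
        rw [sub_mul, ht3R]; ring
      rw [hrem, mul_div_cancel_right₀ _ hR23.ne']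
      rcases min_cases t3 (Lt1 - τ1 - t2) with ⟨hme, _⟩ | ⟨hme, _⟩
      · rw [hmdef, hme]; linarith
      · rw [hmdef, hme]; linarith
  · -- objective equality
    unfold EM ThreeObj
    rw [← ht2def, ← ht3def]
    have hLS : Lt1 * ((τ1 * R21 + m * R23) / Lt1) = τ1 * R21 + m * R23 :=
      mul_div_cancel₀ _ hLt1.ne'
    rw [hLS]
    have hrem : B2 - (τ1 * R21 + m * R23) = (t3 - m) * R23 := by
      rw [sub_mul, ht3R]; ring
    rw [hrem, mul_div_cancel_right₀ _ hR23.ne']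
    have e1 : Lt1 * ((τ1 * P11 + t2 * P12) / Lt1 + (τ1 * P21 + m * P23) / Lt1)
        = τ1 * P11 + t2 * P12 + τ1 * P21 + m * P23 := by field_simp; ring
    rw [e1]
    ring

lemma backward_lemma (α1 α2 B1 B2 Pb1 Pb2 Lt1 Lt2 : ℝ)
    (hα1 : 0 < α1) (hα2 : 0 < α2) (hB1 : 0 < B1) (hB2 : 0 < B2)
    (hPb1 : 0 < Pb1) (hPb2 : 0 < Pb2) (hLt1 : 0 < Lt1) (hLt2 : 0 < Lt2)
    (hL : Lt1 ≤ Lt2)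
    (Q11 Q21 Q23 S21 S23 : ℝ)
    (hF : SMFeas α1 α2 B1 B2 Pb1 Pb2 Lt1 Lt2 Q11 Q21 Q23 S21 S23) :
    ∃ τ1 P11 P12 P21 P23 R11 R12 R21 R23,
      ThreeFeas α1 α2 B1 B2 Pb1 Pb2 Lt1 Lt2 τ1 P11 P12 P21 P23 R11 R12 R21 R23 ∧
      0 < R12 ∧ 0 < R23 ∧
      ThreeObj B1 B2 τ1 P11 P12 P21 P23 R11 R12 R21 R23 =
        EM B2 Lt1 Q11 Q21 Q23 S21 S23 := by
  obtain ⟨h1, h2, h3, h4, h5, h6, h7, h8, h9, h10, h11, h12, h13, h14⟩ := hF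
  have hR : (0:ℝ) < B1 / Lt1 := div_pos hB1 hLt1
  have hcan : Lt1 * (B1 / Lt1) = B1 := mul_div_cancel₀ _ hLt1.ne'
  refine ⟨Lt1, Q11, Q11, Q21, Q23, B1 / Lt1, B1 / Lt1, S21, S23,
    ⟨hLt1.le, hR.le, h8, ?_, ?_, ?_, h10, ?_, ?_, h1, h2, h1, h2, h3, h4, h5, h6,
      h7, h13, h7, h9, h11⟩, hR, h12, ?_⟩
  · rw [hcan]; exact hB1.le
  · rw [hcan]
  · positivity
  · rw [hcan, sub_self, zero_div, add_zero]
  · rw [hcan, sub_self, zero_div, add_zero]; exact h14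
  · unfold ThreeObj EM
    rw [hcan, sub_self, zero_div, zero_mul, add_zero]

/-- Appendix B conclusion: every feasible three-slot point (with R12 > 0, R23 > 0) has a
two-slot counterpart with the same objective value; hence two time slots suffice. -/
theorem two_time_slots_suffice
    (α1 α2 B1 B2 Pb1 Pb2 Lt1 Lt2 : ℝ)
    (hα1 : 0 < α1) (hα2 : 0 < α2) (hB1 : 0 < B1) (hB2 : 0 < B2)
    (hPb1 : 0 < Pb1) (hPb2 : 0 < Pb2) (hLt1 : 0 < Lt1) (hLt2 : 0 < Lt2)
    (hL : Lt1 ≤ Lt2) :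
    (∀ τ1 P11 P12 P21 P23 R11 R12 R21 R23,
      ThreeFeas α1 α2 B1 B2 Pb1 Pb2 Lt1 Lt2 τ1 P11 P12 P21 P23 R11 R12 R21 R23 →
      0 < R12 → 0 < R23 →
      ∃ Q11 Q21 Q23 S21 S23,
        SMFeas α1 α2 B1 B2 Pb1 Pb2 Lt1 Lt2 Q11 Q21 Q23 S21 S23 ∧
        EM B2 Lt1 Q11 Q21 Q23 S21 S23 =
          ThreeObj B1 B2 τ1 P11 P12 P21 P23 R11 R12 R21 R23) ∧
    sInf {E : ℝ | ∃ Q11 Q21 Q23 S21 S23,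
        SMFeas α1 α2 B1 B2 Pb1 Pb2 Lt1 Lt2 Q11 Q21 Q23 S21 S23 ∧
        E = EM B2 Lt1 Q11 Q21 Q23 S21 S23} ≤
      sInf {E : ℝ | ∃ τ1 P11 P12 P21 P23 R11 R12 R21 R23,
        ThreeFeas α1 α2 B1 B2 Pb1 Pb2 Lt1 Lt2 τ1 P11 P12 P21 P23 R11 R12 R21 R23 ∧
        0 < R12 ∧ 0 < R23 ∧
        E = ThreeObj B1 B2 τ1 P11 P12 P21 P23 R11 R12 R21 R23} := by
  constructor
  · intro τ1 P11 P12 P21 P23 R11 R12 R21 R23 hF hR12 hR23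
    exact forward_lemma α1 α2 B1 B2 Pb1 Pb2 Lt1 Lt2 hα1 hα2 hB1 hB2 hPb1 hPb2 hLt1 hLt2 hL
      τ1 P11 P12 P21 P23 R11 R12 R21 R23 hF hR12 hR23
  · apply le_of_eq
    congr 1
    ext E
    constructor
    · rintro ⟨Q11, Q21, Q23, S21, S23, hF, hE⟩
      obtain ⟨τ1, P11, P12, P21, P23, R11, R12, R21, R23, hF3, hR12, hR23, hobj⟩ :=
        backward_lemma α1 α2 B1 B2 Pb1 Pb2 Lt1 Lt2 hα1 hα2 hB1 hB2 hPb1 hPb2 hLt1 hLt2 hL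
          Q11 Q21 Q23 S21 S23 hF
      exact ⟨τ1, P11, P12, P21, P23, R11, R12, R21, R23, hF3, hR12, hR23, by rw [hE, ← hobj]⟩
    · rintro ⟨τ1, P11, P12, P21, P23, R11, R12, R21, R23, hF3, hR12, hR23, hE⟩
      obtain ⟨Q11, Q21, Q23, S21, S23, hF2, hobj⟩ :=
        forward_lemma α1 α2 B1 B2 Pb1 Pb2 Lt1 Lt2 hα1 hα2 hB1 hB2 hPb1 hPb2 hLt1 hLt2 hL
          τ1 P11 P12 P21 P23 R11 R12 R21 R23 hF3 hR12 hR23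
      exact ⟨Q11, Q21, Q23, S21, S23, hF2, by rw [hE, ← hobj]⟩
end

section
/- Let L̃1, L̃2, α1, α2, B1, B2 be positive reals with L̃1 < L̃2, and let f(R) = L̃1·( (2^{B1/L̃1} − 1)/α1 + 2^{B1/L̃1}·(2^R − 1)/α2 ) + ((L̃2 − L̃1)/α2)·( 2^{(B2 − L̃1·R)/(L̃2 − L̃1)} − 1 ). Then f attains its global minimum over ℝ at the unique point R_d = B2/L̃2 − (L̃2 − L̃1)·B1/(L̃1·L̃2), and the derivative of f vanishes at R_d. -/
/-- Case A-I: the two-slot full multiple access energy, as a function of user 2's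
first-slot rate, attains its global minimum at the unique point
R_d = B2/L̃2 − (L̃2 − L̃1)·B1/(L̃1·L̃2), where its derivative vanishes. -/
theorem caseAI_objective_min
    (Lt1 Lt2 α1 α2 B1 B2 : ℝ)
    (hLt1 : 0 < Lt1) (hLt2 : 0 < Lt2) (hα1 : 0 < α1) (hα2 : 0 < α2)
    (hB1 : 0 < B1) (hB2 : 0 < B2) (hL : Lt1 < Lt2)
    (f : ℝ → ℝ)
    (hf : f = fun R : ℝ =>
      Lt1 * (((2 : ℝ) ^ (B1 / Lt1) - 1) / α1 +
        (2 : ℝ) ^ (B1 / Lt1) * ((2 : ℝ) ^ R - 1) / α2) +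
      ((Lt2 - Lt1) / α2) * ((2 : ℝ) ^ ((B2 - Lt1 * R) / (Lt2 - Lt1)) - 1))
    (Rd : ℝ)
    (hRd : Rd = B2 / Lt2 - (Lt2 - Lt1) * B1 / (Lt1 * Lt2)) :
    (∀ R : ℝ, f Rd ≤ f R) ∧
    (∀ R : ℝ, (∀ S : ℝ, f R ≤ f S) → R = Rd) ∧
    deriv f Rd = 0 := by
  have hΔ : (0:ℝ) < Lt2 - Lt1 := sub_pos.mpr hL
  set c : ℝ := Real.log 2 with hc
  have hcpos : 0 < c := Real.log_pos (by norm_num)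
  set E : ℝ := (B1 + B2) / Lt2 with hE
  set gE : ℝ := Real.exp (c * E) with hgE
  have hgEpos : 0 < gE := Real.exp_pos _
  set K : ℝ := Lt1 * (((2:ℝ) ^ (B1 / Lt1) - 1) / α1) -
      Lt1 * (2:ℝ) ^ (B1 / Lt1) / α2 - (Lt2 - Lt1) / α2 with hK
  -- representation of f via exp
  have hrep : ∀ R : ℝ, f R = K + (Lt1 / α2) * Real.exp (c * (B1 / Lt1 + R)) +
      ((Lt2 - Lt1) / α2) * Real.exp (c * ((B2 - Lt1 * R) / (Lt2 - Lt1))) := by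
    intro R
    simp only [hf, hK]
    rw [Real.rpow_def_of_pos (by norm_num : (0:ℝ) < 2),
        Real.rpow_def_of_pos (by norm_num : (0:ℝ) < 2),
        Real.rpow_def_of_pos (by norm_num : (0:ℝ) < 2),
        show c * (B1 / Lt1 + R) = c * (B1 / Lt1) + c * R by ring,
        Real.exp_add]
    ring
  have huRd : B1 / Lt1 + Rd = E := by
    rw [hRd, hE]; field_simp; ring
  have hvRd : (B2 - Lt1 * Rd) / (Lt2 - Lt1) = E := by
    rw [hRd, hE]; field_simp; ring
  have hfRd : f Rd = K + (Lt1 / α2) * gE + ((Lt2 - Lt1) / α2) * gE := by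
    rw [hrep Rd, huRd, hvRd]
  -- tangent line inequalities
  have tangent : ∀ t : ℝ, gE * (1 + c * (t - E)) ≤ Real.exp (c * t) := by
    intro t
    have h1 : c * (t - E) + 1 ≤ Real.exp (c * (t - E)) := Real.add_one_le_exp _
    have h2 := mul_le_mul_of_nonneg_left h1 hgEpos.le
    calc gE * (1 + c * (t - E)) = gE * (c * (t - E) + 1) := by ring
      _ ≤ gE * Real.exp (c * (t - E)) := h2
      _ = Real.exp (c * t) := by
          rw [hgE, ← Real.exp_add]; ring_nf
  have tangent_strict : ∀ t : ℝ, t ≠ E → gE * (1 + c * (t - E)) < Real.exp (c * t) := by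
    intro t ht
    have hne : c * (t - E) ≠ 0 := by
      exact mul_ne_zero hcpos.ne' (sub_ne_zero.mpr ht)
    have h1 : c * (t - E) + 1 < Real.exp (c * (t - E)) := Real.add_one_lt_exp hne
    have h2 := mul_lt_mul_of_pos_left h1 hgEpos
    calc gE * (1 + c * (t - E)) = gE * (c * (t - E) + 1) := by ring
      _ < gE * Real.exp (c * (t - E)) := h2
      _ = Real.exp (c * t) := by
          rw [hgE, ← Real.exp_add]; ring_nf
  -- combination identity
  have hcombo : ∀ R : ℝ, Lt1 * (B1 / Lt1 + R) +
      (Lt2 - Lt1) * ((B2 - Lt1 * R) / (Lt2 - Lt1)) = Lt2 * E := by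
    intro R
    rw [hE]; field_simp; ring
  have hsum : ∀ R : ℝ,
      (Lt1 / α2) * (gE * (1 + c * ((B1 / Lt1 + R) - E))) +
      ((Lt2 - Lt1) / α2) * (gE * (1 + c * ((B2 - Lt1 * R) / (Lt2 - Lt1) - E))) =
      (Lt1 / α2) * gE + ((Lt2 - Lt1) / α2) * gE := by
    intro R
    linear_combination (gE * c / α2) * hcombo R
  have hmin : ∀ R : ℝ, f Rd ≤ f R := by
    intro R
    have h1 := mul_le_mul_of_nonneg_left (tangent (B1 / Lt1 + R))
      (le_of_lt (div_pos hLt1 hα2))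
    have h2 := mul_le_mul_of_nonneg_left (tangent ((B2 - Lt1 * R) / (Lt2 - Lt1)))
      (le_of_lt (div_pos hΔ hα2))
    rw [hfRd, hrep R]
    linarith [hsum R]
  have hstrict : ∀ R : ℝ, R ≠ Rd → f Rd < f R := by
    intro R hne
    have huneq : B1 / Lt1 + R ≠ E := by
      rw [← huRd]
      intro h
      exact hne (by linarith [add_left_cancel h])
    have h1 := mul_lt_mul_of_pos_left (tangent_strict (B1 / Lt1 + R) huneq)
      (div_pos hLt1 hα2)
    have h2 := mul_le_mul_of_nonneg_left (tangent ((B2 - Lt1 * R) / (Lt2 - Lt1)))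
      (le_of_lt (div_pos hΔ hα2))
    rw [hfRd, hrep R]
    linarith [hsum R]
  refine ⟨hmin, ?_, ?_⟩
  · intro R hR
    by_contra hne
    exact absurd (hR Rd) (not_le.mpr (hstrict R hne))
  · have : IsLocalMin f Rd := (isMinOn_univ_iff.mpr hmin).isLocalMin
      (by simp [Filter.univ_mem])
    exact this.deriv_eq_zero
end

section
/- Let L̃1, L̃2, α1, α2, B1, B2 be positive reals with L̃1 < L̃2, and define g : ℝ → ℝ by g(R) = L̃1·( (2^{B1/L̃1 + R} − 2^R)/α1 + (2^R − 1)/α2 ) + ((L̃2 − L̃1)/α2)·( 2^{(B2 − L̃1·R)/(L̃2 − L̃1)} − 1 ). Then g is convex on ℝ and attains its global minimum over ℝ at the unique point R_d = B2/L̃2 − (L̃2 − L̃1)·φ1/L̃2, where φ1 = log2( (α2/α1)·(2^{B1/L̃1} − 1) + 1 ). -/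
lemma exp_affine_convex (c d : ℝ) :
    ConvexOn ℝ Set.univ (fun R : ℝ => Real.exp (c * R + d)) := by
  refine ⟨convex_univ, fun x _ y _ a b ha hb hab => ?_⟩
  have h := convexOn_exp.2 (Set.mem_univ (c * x + d)) (Set.mem_univ (c * y + d)) ha hb hab
  simp only [smul_eq_mul] at h ⊢
  calc Real.exp (c * (a * x + b * y) + d)
      = Real.exp (a * (c * x + d) + b * (c * y + d)) := by
        congr 1; linear_combination (-d) * hab
    _ ≤ a * Real.exp (c * x + d) + b * Real.exp (c * y + d) := h

lemma two_exp_convex (A C K c1 d1 c2 d2 : ℝ) (hA : 0 ≤ A) (hC : 0 ≤ C) :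
    ConvexOn ℝ Set.univ
      (fun R : ℝ => A * Real.exp (c1 * R + d1) + C * Real.exp (c2 * R + d2) + K) := by
  have h1 := (exp_affine_convex c1 d1).smul hA
  have h2 := (exp_affine_convex c2 d2).smul hC
  have h := (h1.add h2).add (convexOn_const K convex_univ)
  convert h using 1 <;> rfl

/-- Case B-I: the two-slot full multiple access energy, as a function of user 2's
first-slot rate, is convex and attains its global minimum at the unique point
R_d = B2/L̃2 − (L̃2 − L̃1)·φ1/L̃2 with φ1 = log2((α2/α1)(2^(B1/L̃1) − 1) + 1). -/
theorem caseBI_objective_convex_min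
    (Lt1 Lt2 α1 α2 B1 B2 : ℝ)
    (hLt1 : 0 < Lt1) (hLt2 : 0 < Lt2) (hα1 : 0 < α1) (hα2 : 0 < α2)
    (hB1 : 0 < B1) (hB2 : 0 < B2) (hL : Lt1 < Lt2)
    (g : ℝ → ℝ)
    (hg : g = fun R : ℝ =>
      Lt1 * (((2 : ℝ) ^ (B1 / Lt1 + R) - (2 : ℝ) ^ R) / α1 +
        ((2 : ℝ) ^ R - 1) / α2) +
      ((Lt2 - Lt1) / α2) * ((2 : ℝ) ^ ((B2 - Lt1 * R) / (Lt2 - Lt1)) - 1))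
    (Rd : ℝ)
    (hRd : Rd = B2 / Lt2 -
      (Lt2 - Lt1) * log2 ((α2 / α1) * ((2 : ℝ) ^ (B1 / Lt1) - 1) + 1) / Lt2) :
    ConvexOn ℝ Set.univ g ∧
    (∀ R : ℝ, g Rd ≤ g R) ∧
    (∀ R : ℝ, (∀ S : ℝ, g R ≤ g S) → R = Rd) := by
  have hD : 0 < Lt2 - Lt1 := sub_pos.2 hL
  set l : ℝ := Real.log 2 with hl
  have hl0 : 0 < l := Real.log_pos (by norm_num)
  have hb : 0 < B1 / Lt1 := div_pos hB1 hLt1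
  have h2e : (2 : ℝ) ^ (B1 / Lt1) = Real.exp (l * (B1 / Lt1)) :=
    Real.rpow_def_of_pos two_pos _
  have h2b : (1 : ℝ) < (2 : ℝ) ^ (B1 / Lt1) := by
    rw [h2e]
    have h : 0 < l * (B1 / Lt1) := mul_pos hl0 hb
    exact Real.one_lt_exp_iff.mpr h
  set X : ℝ := (α2 / α1) * ((2 : ℝ) ^ (B1 / Lt1) - 1) + 1 with hXdef
  have hX0 : 0 < X := by
    have h1 : 0 < (2 : ℝ) ^ (B1 / Lt1) - 1 := by linarith
    have : 0 < (α2 / α1) * ((2 : ℝ) ^ (B1 / Lt1) - 1) := by positivity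
    rw [hXdef]; linarith
  set φ : ℝ := log2 X with hφ
  have hexpφ : Real.exp (l * φ) = X := by
    rw [hφ, log2, ← Real.rpow_def_of_pos two_pos]
    exact Real.rpow_logb two_pos (by norm_num) hX0
  set A : ℝ := Lt1 * ((Real.exp (l * (B1 / Lt1)) - 1) / α1 + 1 / α2) with hA
  have hA0 : 0 < A := by
    have h1 : 0 < Real.exp (l * (B1 / Lt1)) - 1 := by rw [← h2e]; linarith
    have h2 : 0 < (Real.exp (l * (B1 / Lt1)) - 1) / α1 := div_pos h1 hα1
    have h3 : 0 < 1 / α2 := by positivity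
    exact mul_pos hLt1 (by linarith)
  set C : ℝ := (Lt2 - Lt1) / α2 with hC
  have hC0 : 0 < C := div_pos hD hα2
  set K : ℝ := -(Lt1 / α2) - C with hK
  -- rewrite g in exponential form
  have hgE : ∀ R : ℝ, g R = A * Real.exp (l * R)
      + C * Real.exp (l * ((B2 - Lt1 * R) / (Lt2 - Lt1))) + K := by
    intro R
    rw [hg]
    simp only
    rw [Real.rpow_def_of_pos two_pos, Real.rpow_def_of_pos two_pos,
      Real.rpow_def_of_pos two_pos,
      show Real.log 2 * (B1 / Lt1 + R) = Real.log 2 * (B1 / Lt1) + Real.log 2 * R by ring,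
      Real.exp_add, ← hl]
    rw [hA, hK, hC]
    field_simp
    ring
  -- stationarity at Rd
  have harg : (B2 - Lt1 * Rd) / (Lt2 - Lt1) = Rd + φ := by
    rw [hRd, hφ, hXdef]
    field_simp
    ring
  have key : A * Real.exp (l * Rd)
      = (Lt1 / α2) * Real.exp (l * ((B2 - Lt1 * Rd) / (Lt2 - Lt1))) := by
    rw [harg, mul_add, Real.exp_add, hexpφ, hA, hXdef, h2e]
    field_simp
  -- exact identity for g R - g Rd
  have hiden : ∀ R : ℝ, g R = g Rd
      + A * Real.exp (l * Rd) * (Real.exp (l * (R - Rd)) - 1 - l * (R - Rd))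
      + C * Real.exp (l * ((B2 - Lt1 * Rd) / (Lt2 - Lt1))) *
          (Real.exp (-(l * Lt1 / (Lt2 - Lt1)) * (R - Rd)) - 1
            - (-(l * Lt1 / (Lt2 - Lt1)) * (R - Rd))) := by
    intro R
    have e1 : Real.exp (l * R) = Real.exp (l * Rd) * Real.exp (l * (R - Rd)) := by
      rw [← Real.exp_add]; ring_nf
    have e2 : Real.exp (l * ((B2 - Lt1 * R) / (Lt2 - Lt1)))
        = Real.exp (l * ((B2 - Lt1 * Rd) / (Lt2 - Lt1)))
          * Real.exp (-(l * Lt1 / (Lt2 - Lt1)) * (R - Rd)) := by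
      rw [← Real.exp_add]
      congr 1
      field_simp
      ring
    have hq : (Lt2 - Lt1) / α2 * (-(l * Lt1 / (Lt2 - Lt1)) * (R - Rd))
        = -(Lt1 / α2) * (l * (R - Rd)) := by
      field_simp
    rw [hgE R, hgE Rd, e1, e2, hC]
    linear_combination (l * (R - Rd)) * key
      + Real.exp (l * ((B2 - Lt1 * Rd) / (Lt2 - Lt1))) * hq
  -- positivity of the remainder terms
  have hterm : ∀ s : ℝ, 0 ≤ Real.exp s - 1 - s := by
    intro s
    have := Real.add_one_le_exp s
    linarith
  have htermlt : ∀ s : ℝ, s ≠ 0 → 0 < Real.exp s - 1 - s := by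
    intro s hs
    have := Real.add_one_lt_exp hs
    linarith
  have hmin : ∀ R : ℝ, g Rd ≤ g R := by
    intro R
    rw [hiden R]
    have h1 : 0 ≤ A * Real.exp (l * Rd) *
        (Real.exp (l * (R - Rd)) - 1 - l * (R - Rd)) := by
      have := hterm (l * (R - Rd))
      positivity
    have h2 : 0 ≤ C * Real.exp (l * ((B2 - Lt1 * Rd) / (Lt2 - Lt1))) *
        (Real.exp (-(l * Lt1 / (Lt2 - Lt1)) * (R - Rd)) - 1
          - (-(l * Lt1 / (Lt2 - Lt1)) * (R - Rd))) := by
      have := hterm (-(l * Lt1 / (Lt2 - Lt1)) * (R - Rd))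
      positivity
    linarith
  have hstrict : ∀ R : ℝ, R ≠ Rd → g Rd < g R := by
    intro R hR
    rw [hiden R]
    have hs1 : l * (R - Rd) ≠ 0 := by
      have : R - Rd ≠ 0 := sub_ne_zero.2 hR
      positivity
    have h1 : 0 < A * Real.exp (l * Rd) *
        (Real.exp (l * (R - Rd)) - 1 - l * (R - Rd)) := by
      have := htermlt _ hs1
      positivity
    have h2 : 0 ≤ C * Real.exp (l * ((B2 - Lt1 * Rd) / (Lt2 - Lt1))) *
        (Real.exp (-(l * Lt1 / (Lt2 - Lt1)) * (R - Rd)) - 1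
          - (-(l * Lt1 / (Lt2 - Lt1)) * (R - Rd))) := by
      have := hterm (-(l * Lt1 / (Lt2 - Lt1)) * (R - Rd))
      positivity
    linarith
  refine ⟨?_, hmin, ?_⟩
  · have hfun : g = fun R : ℝ => A * Real.exp (l * R + 0)
        + C * Real.exp ((-(l * Lt1 / (Lt2 - Lt1))) * R + l * B2 / (Lt2 - Lt1)) + K := by
      funext R
      rw [hgE R]
      congr 2
      · rw [add_zero]
      · congr 1
        field_simp
        ring
    rw [hfun]
    exact two_exp_convex A C K l 0 (-(l * Lt1 / (Lt2 - Lt1))) (l * B2 / (Lt2 - Lt1))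
      hA0.le hC0.le
  · intro R hRmin
    by_contra hne
    exact absurd (hRmin Rd) (not_le.2 (hstrict R hne))
end

section
/- Let B, L̃, α, P̄ be positive reals with B/L̃ ≤ log2(1 + α·P̄). Then: (i) the point R* = B/L̃, P* = (2^{B/L̃} − 1)/α satisfies 0 ≤ P* ≤ P̄, 0 < R* ≤ log2(1 + α·P*), and B/R* ≤ L̃; and (ii) for every pair (P, R) with 0 ≤ P ≤ P̄, 0 < R ≤ log2(1 + α·P), and B/R ≤ L̃, one has (B/R)·P ≥ (B/R*)·P* = L̃·(2^{B/L̃} − 1)/α. (Closed-form optimal solution of the single offloading user problem: transmit at exactly the rate B/L̃ with the minimal power supporting it.) -/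
lemma convex2pow : ConvexOn ℝ Set.univ (fun x : ℝ => (2:ℝ) ^ x) := by
  have h : (fun x : ℝ => (2:ℝ) ^ x) = (Real.exp ∘ (LinearMap.toAffineMap (Real.log 2 • LinearMap.id : ℝ →ₗ[ℝ] ℝ))) := by
    funext x
    simp [Real.rpow_def_of_pos (by norm_num : (0:ℝ) < 2), mul_comm]
  rw [h]
  have := convexOn_exp.comp_affineMap (LinearMap.toAffineMap (Real.log 2 • LinearMap.id : ℝ →ₗ[ℝ] ℝ))
  simpa using this

lemma slope2 {r R : ℝ} (hr : 0 < r) (hrR : r ≤ R) :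
    ((2:ℝ) ^ r - 1) / r ≤ ((2:ℝ) ^ R - 1) / R := by
  have := convex2pow.secant_mono (a := 0) (x := r) (y := R) trivial trivial trivial
    (ne_of_gt hr) (ne_of_gt (hr.trans_le hrR)) hrR
  simpa [Real.rpow_zero] using this

/-- Closed-form optimal solution of the single offloading user problem: transmit at exactly
the rate B/L̃ with the minimal power supporting it. -/
theorem single_user_optimal
    (B Lt α Pb : ℝ)
    (hB : 0 < B) (hLt : 0 < Lt) (hα : 0 < α) (hPb : 0 < Pb)
    (hfeas : B / Lt ≤ log2 (1 + α * Pb))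
    (Rs Ps : ℝ)
    (hRs : Rs = B / Lt)
    (hPs : Ps = ((2 : ℝ) ^ (B / Lt) - 1) / α) :
    (0 ≤ Ps ∧ Ps ≤ Pb ∧ 0 < Rs ∧ Rs ≤ log2 (1 + α * Ps) ∧ B / Rs ≤ Lt) ∧
    (B / Rs) * Ps = Lt * ((2 : ℝ) ^ (B / Lt) - 1) / α ∧
    (∀ P R : ℝ, 0 ≤ P → P ≤ Pb → 0 < R → R ≤ log2 (1 + α * P) → B / R ≤ Lt →
      (B / Rs) * Ps ≤ (B / R) * P) := by
  have hBLt : 0 < B / Lt := div_pos hB hLt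
  have hone : (1:ℝ) ≤ (2:ℝ) ^ (B / Lt) := Real.one_le_rpow (by norm_num) hBLt.le
  have hPbpos : (0:ℝ) < 1 + α * Pb := by nlinarith
  have hfeas' : (2:ℝ) ^ (B / Lt) ≤ 1 + α * Pb := by
    have := Real.rpow_le_rpow_of_exponent_le (by norm_num : (1:ℝ) ≤ 2) hfeas
    rwa [log2, Real.rpow_logb (by norm_num) (by norm_num) hPbpos] at this
  have hPs0 : 0 ≤ Ps := by rw [hPs]; exact div_nonneg (by linarith) hα.le
  have hPsPb : Ps ≤ Pb := by
    rw [hPs, div_le_iff₀ hα]; nlinarith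
  have h1aPs : 1 + α * Ps = (2:ℝ) ^ (B / Lt) := by
    rw [hPs, mul_div_cancel₀ _ hα.ne']; ring
  have hlogPs : log2 (1 + α * Ps) = B / Lt := by
    rw [h1aPs, log2, Real.logb_rpow (by norm_num) (by norm_num)]
  have hBRs : B / Rs = Lt := by
    rw [hRs]; field_simp
  refine ⟨⟨hPs0, hPsPb, by rw [hRs]; exact hBLt, by rw [hlogPs, hRs], by rw [hBRs]⟩, ?_, ?_⟩
  · rw [hBRs, hPs, mul_div_assoc]
  · intro P R hP hPPb hR hRlog hBRLt
    have h1aP : (0:ℝ) < 1 + α * P := by nlinarith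
    have h2R : (2:ℝ) ^ R ≤ 1 + α * P := by
      have := Real.rpow_le_rpow_of_exponent_le (by norm_num : (1:ℝ) ≤ 2) hRlog
      rwa [log2, Real.rpow_logb (by norm_num) (by norm_num) h1aP] at this
    have hRge : B / Lt ≤ R := by
      rw [div_le_iff₀ hR] at hBRLt
      rw [div_le_iff₀ hLt]; linarith [mul_comm R Lt]
    have hslope := slope2 hBLt hRge
    have hPlow : ((2:ℝ) ^ R - 1) / α ≤ P := by
      rw [div_le_iff₀ hα]; nlinarith
    have key : Lt * ((2:ℝ) ^ (B / Lt) - 1) / α ≤ (B / R) * (((2:ℝ) ^ R - 1) / α) := by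
      have hBα : 0 < B / α := div_pos hB hα
      have := mul_le_mul_of_nonneg_left hslope hBα.le
      calc Lt * ((2:ℝ) ^ (B / Lt) - 1) / α = (B / α) * (((2:ℝ) ^ (B / Lt) - 1) / (B / Lt)) := by
            field_simp [hα.ne', hB.ne', hLt.ne']
        _ ≤ (B / α) * (((2:ℝ) ^ R - 1) / R) := this
        _ = (B / R) * (((2:ℝ) ^ R - 1) / α) := by
            rw [div_mul_div_comm, div_mul_div_comm, mul_comm α R]
    rw [hBRs, hPs, ← mul_div_assoc]
    calc Lt * ((2:ℝ) ^ (B / Lt) - 1) / α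
        ≤ (B / R) * (((2:ℝ) ^ R - 1) / α) := key
      _ ≤ (B / R) * P := mul_le_mul_of_nonneg_left hPlow (by positivity)
end

section
/- Let α1, α2 > 0 and let R11, R21 ≥ 0 be reals such that Δ := 2^{R11} + 2^{R21} − 2^{R11 + R21} > 0. Define P11 = 2^{R21}·(2^{R11} − 1)/(α1·Δ) and P21 = 2^{R11}·(2^{R21} − 1)/(α2·Δ). Then P11 ≥ 0, P21 ≥ 0, R11 = log2(1 + α1·P11/(1 + α2·P21)), and R21 = log2(1 + α2·P21/(1 + α1·P11)). (Closed-form minimal powers achieving a given rate pair with independent decoding.) -/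
/-- Closed-form minimal powers achieving a given rate pair with independent decoding. -/
theorem ind_dec_closed_form_powers
    (α1 α2 R11 R21 : ℝ)
    (hα1 : 0 < α1) (hα2 : 0 < α2) (hR11 : 0 ≤ R11) (hR21 : 0 ≤ R21)
    (hΔ : 0 < (2 : ℝ) ^ R11 + (2 : ℝ) ^ R21 - (2 : ℝ) ^ (R11 + R21))
    (P11 P21 : ℝ)
    (hP11 : P11 = (2 : ℝ) ^ R21 * ((2 : ℝ) ^ R11 - 1) /
      (α1 * ((2 : ℝ) ^ R11 + (2 : ℝ) ^ R21 - (2 : ℝ) ^ (R11 + R21))))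
    (hP21 : P21 = (2 : ℝ) ^ R11 * ((2 : ℝ) ^ R21 - 1) /
      (α2 * ((2 : ℝ) ^ R11 + (2 : ℝ) ^ R21 - (2 : ℝ) ^ (R11 + R21)))) :
    0 ≤ P11 ∧ 0 ≤ P21 ∧
    R11 = log2 (1 + α1 * P11 / (1 + α2 * P21)) ∧
    R21 = log2 (1 + α2 * P21 / (1 + α1 * P11)) := by
  have ha : (1:ℝ) ≤ (2:ℝ)^R11 := Real.one_le_rpow one_le_two hR11
  have hb : (1:ℝ) ≤ (2:ℝ)^R21 := Real.one_le_rpow one_le_two hR21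
  have hab : (2:ℝ)^(R11+R21) = (2:ℝ)^R11 * (2:ℝ)^R21 := Real.rpow_add two_pos _ _
  set a := (2:ℝ)^R11 with hA
  set b := (2:ℝ)^R21 with hB
  rw [hab] at hΔ hP11 hP21
  have hd : a + b - a*b ≠ 0 := ne_of_gt hΔ
  have hb0 : (0:ℝ) < b := lt_of_lt_of_le one_pos hb
  have ha0 : (0:ℝ) < a := lt_of_lt_of_le one_pos ha
  have hP11nn : 0 ≤ P11 := by
    rw [hP11]
    apply div_nonneg
    · nlinarith
    · nlinarith
  have hP21nn : 0 ≤ P21 := by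
    rw [hP21]
    apply div_nonneg
    · nlinarith
    · nlinarith
  have h1 : 1 + α2 * P21 = b / (a + b - a*b) := by
    rw [hP21]; field_simp; ring
  have h2 : 1 + α1 * P11 = a / (a + b - a*b) := by
    rw [hP11]; field_simp [show a + b - b * a ≠ 0 by rwa [mul_comm b a]]; ring
  have e1 : 1 + α1 * P11 / (1 + α2 * P21) = a := by
    rw [h1, hP11]
    field_simp [show a + b - b * a ≠ 0 by rwa [mul_comm b a]]
    ring
  have e2 : 1 + α2 * P21 / (1 + α1 * P11) = b := by
    rw [h2, hP21]
    field_simp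
    ring
  refine ⟨hP11nn, hP21nn, ?_, ?_⟩
  · rw [e1, hA, log2, Real.logb_rpow two_pos (by norm_num)]
  · rw [e2, hB, log2, Real.logb_rpow two_pos (by norm_num)]
end

section
/- Let α1, α2, P̄1, P̄2, B1, L̃1 be positive reals and R21 ≥ 0. The interval max{ (2^{B1/L̃1} − 1)/α1 , (2^{B1/L̃1 + R21} − 1 − α2·P̄2)/α1 } ≤ P ≤ min{ P̄1 , 2^{R21}·(2^{B1/L̃1} − 1)/α1 } is nonempty if and only if B1/L̃1 ≤ log2(1 + α1·P̄1) and R21 ≤ min{ log2(1 + α2·P̄2) , log2(1 + α1·P̄1 + α2·P̄2) − B1/L̃1 }. -/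
/-- The feasible interval for user 1's first-slot power (given user 2's first-slot rate R21)
is nonempty iff B1/L̃1 ≤ log2(1 + α1·P̄1) and
R21 ≤ min{log2(1 + α2·P̄2), log2(1 + α1·P̄1 + α2·P̄2) − B1/L̃1}. -/
theorem power_interval_nonempty_iff
    (α1 α2 Pb1 Pb2 B1 Lt1 R21 : ℝ)
    (hα1 : 0 < α1) (hα2 : 0 < α2) (hPb1 : 0 < Pb1) (hPb2 : 0 < Pb2)
    (hB1 : 0 < B1) (hLt1 : 0 < Lt1) (hR21 : 0 ≤ R21) :
    (∃ P : ℝ,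
      max (((2 : ℝ) ^ (B1 / Lt1) - 1) / α1)
          (((2 : ℝ) ^ (B1 / Lt1 + R21) - 1 - α2 * Pb2) / α1) ≤ P ∧
      P ≤ min Pb1 ((2 : ℝ) ^ R21 * ((2 : ℝ) ^ (B1 / Lt1) - 1) / α1)) ↔
    (B1 / Lt1 ≤ log2 (1 + α1 * Pb1) ∧
      R21 ≤ min (log2 (1 + α2 * Pb2)) (log2 (1 + α1 * Pb1 + α2 * Pb2) - B1 / Lt1)) := by
  have h2 : (1:ℝ) < 2 := one_lt_two
  set b := B1 / Lt1 with hbdef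
  have hbpos : 0 < b := div_pos hB1 hLt1
  have h2b : (1:ℝ) < (2:ℝ) ^ b := Real.one_lt_rpow_iff_of_pos two_pos |>.mpr (Or.inl ⟨h2, hbpos⟩)
  have h2r : (1:ℝ) ≤ (2:ℝ) ^ R21 := by
    have := Real.rpow_le_rpow_of_exponent_le h2.le hR21 (y := 0)
    simpa using this
  have hadd : (2:ℝ) ^ (b + R21) = (2:ℝ) ^ b * (2:ℝ) ^ R21 := Real.rpow_add two_pos _ _
  -- equivalences for the interval endpoints
  have e1 : ((2:ℝ)^b - 1)/α1 ≤ Pb1 ↔ (2:ℝ)^b ≤ 1 + α1*Pb1 := by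
    rw [div_le_iff₀ hα1]; constructor <;> intro h <;> linarith
  have e2 : ((2:ℝ)^(b+R21) - 1 - α2*Pb2)/α1 ≤ Pb1 ↔
      (2:ℝ)^(b+R21) ≤ 1 + α1*Pb1 + α2*Pb2 := by
    rw [div_le_iff₀ hα1]; constructor <;> intro h <;> linarith
  have e3 : ((2:ℝ)^(b+R21) - 1 - α2*Pb2)/α1 ≤ (2:ℝ)^R21*((2:ℝ)^b - 1)/α1 ↔
      (2:ℝ)^R21 ≤ 1 + α2*Pb2 := by
    rw [div_le_div_iff_of_pos_right hα1, hadd]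
    constructor <;> intro h <;> nlinarith
  have e4 : ((2:ℝ)^b - 1)/α1 ≤ (2:ℝ)^R21*((2:ℝ)^b - 1)/α1 := by
    rw [div_le_div_iff_of_pos_right hα1]
    nlinarith
  -- equivalences for the log side
  have f1 : b ≤ log2 (1+α1*Pb1) ↔ (2:ℝ)^b ≤ 1+α1*Pb1 := by
    rw [log2, Real.le_logb_iff_rpow_le h2 (by positivity)]
  have f2 : R21 ≤ log2 (1+α2*Pb2) ↔ (2:ℝ)^R21 ≤ 1+α2*Pb2 := by
    rw [log2, Real.le_logb_iff_rpow_le h2 (by positivity)]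
  have f3 : R21 ≤ log2 (1+α1*Pb1+α2*Pb2) - b ↔ (2:ℝ)^(b+R21) ≤ 1+α1*Pb1+α2*Pb2 := by
    rw [log2, le_sub_iff_add_le, add_comm R21 b,
      Real.le_logb_iff_rpow_le h2 (by positivity)]
  constructor
  · rintro ⟨P, h1, h2'⟩
    have hmm := le_trans h1 h2'
    rw [max_le_iff, le_min_iff, le_min_iff] at hmm
    obtain ⟨⟨a11, _⟩, ⟨a21, a22⟩⟩ := hmm
    exact ⟨f1.mpr (e1.mp a11), le_min (f2.mpr (e3.mp a22)) (f3.mpr (e2.mp a21))⟩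
  · rintro ⟨h1, h2'⟩
    rw [le_min_iff] at h2'
    refine ⟨max _ _, le_refl _, ?_⟩
    exact max_le (le_min (e1.mpr (f1.mp h1)) e4)
      (le_min (e2.mpr (f3.mp h2'.2)) (e3.mpr (f2.mp h2'.1)))
end

section
/- Let α1, α2, B1, B2, P̄1, P̄2, L̃1, L̃2 be positive reals with L̃1 < L̃2. The feasible set S_M of the two-slot full multiple access offloading problem is nonempty if and only if both of the following hold: (i) B1/L̃1 ≤ log2(1 + α1·P̄1), and (ii) max{ 0 , (B2 − (L̃2 − L̃1)·log2(1 + α2·P̄2))/L̃1 } ≤ min{ log2(1 + α2·P̄2) , log2(1 + α1·P̄1 + α2·P̄2) − B1/L̃1 }. -/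
lemma log2_mono {x y : ℝ} (hx : 0 < x) (hxy : x ≤ y) : log2 x ≤ log2 y :=
  Real.logb_le_logb_of_le one_lt_two hx hxy

/-- Feasibility characterization of the two-slot full multiple access offloading problem. -/
theorem twoslot_feasible_iff
    (α1 α2 B1 B2 Pb1 Pb2 Lt1 Lt2 : ℝ)
    (hα1 : 0 < α1) (hα2 : 0 < α2) (hB1 : 0 < B1) (hB2 : 0 < B2)
    (hPb1 : 0 < Pb1) (hPb2 : 0 < Pb2) (hLt1 : 0 < Lt1) (hLt2 : 0 < Lt2)
    (hL : Lt1 < Lt2) :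
    (∃ P11 P21 P23 R21 R23,
        SMFeas α1 α2 B1 B2 Pb1 Pb2 Lt1 Lt2 P11 P21 P23 R21 R23) ↔
    (B1 / Lt1 ≤ log2 (1 + α1 * Pb1) ∧
      max 0 ((B2 - (Lt2 - Lt1) * log2 (1 + α2 * Pb2)) / Lt1) ≤
        min (log2 (1 + α2 * Pb2)) (log2 (1 + α1 * Pb1 + α2 * Pb2) - B1 / Lt1)) := by
  set C2 := log2 (1 + α2 * Pb2) with hC2def
  set C12 := log2 (1 + α1 * Pb1 + α2 * Pb2) with hC12def
  have hC2pos : 0 < C2 := Real.logb_pos one_lt_two (by nlinarith)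
  constructor
  · rintro ⟨P11, P21, P23, R21, R23, h1, h2, h3, h4, h5, h6, h7, h8, h9, h10, h11, h12, h13, h14⟩
    have m1 : α1 * P11 ≤ α1 * Pb1 := mul_le_mul_of_nonneg_left h2 hα1.le
    have m2 : α2 * P21 ≤ α2 * Pb2 := mul_le_mul_of_nonneg_left h4 hα2.le
    have m3 : α2 * P23 ≤ α2 * Pb2 := mul_le_mul_of_nonneg_left h6 hα2.le
    have n1 : 0 ≤ α1 * P11 := mul_nonneg hα1.le h1
    have n2 : 0 ≤ α2 * P21 := mul_nonneg hα2.le h3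
    have n3 : 0 ≤ α2 * P23 := mul_nonneg hα2.le h5
    have hP21C : log2 (1 + α2 * P21) ≤ C2 := log2_mono (by linarith) (by linarith)
    have hP23C : log2 (1 + α2 * P23) ≤ C2 := log2_mono (by linarith) (by linarith)
    have hP11C : log2 (1 + α1 * P11) ≤ log2 (1 + α1 * Pb1) :=
      log2_mono (by linarith) (by linarith)
    have hmixC : log2 (1 + α1 * P11 + α2 * P21) ≤ C12 :=
      log2_mono (by linarith) (by linarith)
    have hR21C : R21 ≤ C2 := h9.trans hP21C
    have hR23C : R23 ≤ C2 := h13.trans hP23C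
    have hsum : B1 / Lt1 + R21 ≤ C12 := h11.trans hmixC
    have hkey : B2 - (Lt2 - Lt1) * C2 ≤ Lt1 * R21 := by
      have h14' : (B2 - Lt1 * R21) / R23 ≤ Lt2 - Lt1 := by linarith
      have h14'' := (div_le_iff₀ h12).mp h14'
      have := mul_le_mul_of_nonneg_left hR23C (by linarith : (0:ℝ) ≤ Lt2 - Lt1)
      linarith
    refine ⟨h7.trans hP11C, max_le (le_min hC2pos.le (by linarith)) (le_min ?_ ?_)⟩
    · rw [div_le_iff₀ hLt1]
      have := mul_le_mul_of_nonneg_left hR21C hLt1.le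
      linarith
    · rw [div_le_iff₀ hLt1]
      have h' : R21 ≤ C12 - B1 / Lt1 := by linarith
      have := mul_le_mul_of_nonneg_left h' hLt1.le
      linarith
  · rintro ⟨hc1, hc2⟩
    set q := (B2 - (Lt2 - Lt1) * C2) / Lt1 with hqdef
    set Q := max 0 q with hQdef
    have hQ0 : 0 ≤ Q := le_max_left _ _
    have hQC2 : Q ≤ C2 := hc2.trans (min_le_left _ _)
    have hQ12 : Q ≤ C12 - B1 / Lt1 := hc2.trans (min_le_right _ _)
    have hqQ : q ≤ Q := le_max_right _ _
    have hq : B2 - (Lt2 - Lt1) * C2 = Lt1 * q := by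
      rw [hqdef]; field_simp
    have hLQ : B2 - (Lt2 - Lt1) * C2 ≤ Lt1 * Q := by
      have := mul_le_mul_of_nonneg_left hqQ hLt1.le
      linarith
    refine ⟨Pb1, Pb2, Pb2, Q, C2, le_of_lt hPb1, le_refl _, le_of_lt hPb2, le_refl _,
      le_of_lt hPb2, le_refl _, hc1, hQ0, hQC2, ?_, by linarith, hC2pos, le_refl _, ?_⟩
    · have hnn : 0 ≤ (Lt2 - Lt1) * C2 := mul_nonneg (by linarith) hC2pos.le
      calc Lt1 * Q = max (Lt1 * 0) (Lt1 * q) := by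
            rw [hQdef, mul_max_of_nonneg _ _ hLt1.le]
        _ ≤ B2 := by
            rw [mul_zero]
            exact max_le hB2.le (by linarith)
    · have hd : (B2 - Lt1 * Q) / C2 ≤ Lt2 - Lt1 := by
        rw [div_le_iff₀ hC2pos]
        linarith
      linarith
end
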